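/- Record sampling representation of precision: if a random record i is drawn from D with probabilities p_i > 0 summing to 1, then pairwise precision P = E[ g(c(i), 𝒞̂) / (p_i · |c(i)|) ], where g(c, 𝒞̂) = (Σ_{ĉ ∈ 𝒞̂} C(|c ∩ ĉ|, 2)) / (Σ_{ĉ ∈ 𝒞̂} C(|ĉ|, 2)). -/

import Mathlib

open Finset

/-- The set of unordered pairs of distinct elements lying in a common block of `P`. -/
def clPairs {α : Type*} [DecidableEq α] (P : Finset (Finset α)) : Finset (Sym2 α) :=
  (P.sup fun c => c.sym2).filter (fun p => ¬ p.IsDiag)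

/-- The block of the partition `P` containing `i`. -/
def partOf {α : Type*} [DecidableEq α] (P : Finset (Finset α)) (i : α) : Finset α :=
  (P.filter (fun c => i ∈ c)).sup id

/-- `f(c, 𝒞̂) = Σ_{ĉ ∈ 𝒞̂} C(|c ∩ ĉ|, 2)`, real-valued. -/
noncomputable def ffun {α : Type*} [DecidableEq α] (Cp : Finset (Finset α)) (c : Finset α) : ℝ :=
  ∑ d ∈ Cp, ((c ∩ d).card.choose 2 : ℝ)

/-- `g(c, 𝒞̂) = f(c, 𝒞̂) / Σ_{ĉ ∈ 𝒞̂} C(|ĉ|, 2)`. -/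
noncomputable def gfun {α : Type*} [DecidableEq α] (Cp : Finset (Finset α)) (c : Finset α) : ℝ :=
  ffun Cp c / (∑ d ∈ Cp, (d.card.choose 2 : ℝ))

lemma filter_sym2_eq {α : Type*} [DecidableEq α] (s : Finset α) :
    s.sym2.filter (fun p => ¬ p.IsDiag) = s.offDiag.image Sym2.mk.uncurry := by
  ext z
  induction z using Sym2.ind with
  | _ a b =>
    simp only [mem_filter, Finset.mk_mem_sym2_iff, Sym2.isDiag_iff_proj_eq, mem_image,
      Finset.mem_offDiag, Prod.exists, Function.uncurry_apply_pair]
    constructor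
    · rintro ⟨⟨ha, hb⟩, hne⟩
      exact ⟨a, b, ⟨ha, hb, hne⟩, rfl⟩
    · rintro ⟨x, y, ⟨hx, hy, hne⟩, h⟩
      rw [Sym2.eq_iff] at h
      rcases h with ⟨rfl, rfl⟩ | ⟨rfl, rfl⟩
      · exact ⟨⟨hx, hy⟩, hne⟩
      · exact ⟨⟨hy, hx⟩, fun h => hne h.symm⟩

lemma card_filter_sym2 {α : Type*} [DecidableEq α] (s : Finset α) :
    (s.sym2.filter (fun p => ¬ p.IsDiag)).card = s.card.choose 2 := by
  rw [filter_sym2_eq]; exact Sym2.card_image_offDiag s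

lemma mem_clPairs {α : Type*} [DecidableEq α] (P : Finset (Finset α)) (m : Sym2 α) :
    m ∈ clPairs P ↔ (∃ c ∈ P, m ∈ c.sym2) ∧ ¬ m.IsDiag := by
  simp [clPairs, mem_filter, Finset.mem_sup]

lemma card_clPairs {α : Type*} [DecidableEq α] {P : Finset (Finset α)}
    (hdisj : (P : Set (Finset α)).PairwiseDisjoint id) :
    (clPairs P).card = ∑ c ∈ P, c.card.choose 2 := by
  have heq : clPairs P = P.biUnion (fun c => c.sym2.filter (fun p => ¬ p.IsDiag)) := by
    ext m
    simp only [mem_clPairs, mem_biUnion, mem_filter]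
    tauto
  rw [heq, card_biUnion, ]
  · exact Finset.sum_congr rfl fun c _ => card_filter_sym2 c
  · intro c hc d hd hcd
    rw [Function.onFun, Finset.disjoint_left]
    intro m hmc hmd
    induction m using Sym2.ind with
    | _ a b =>
      simp only [mem_filter, Finset.mk_mem_sym2_iff, Sym2.isDiag_iff_proj_eq] at hmc hmd
      exact Finset.disjoint_left.mp (hdisj hc hd hcd) hmc.1.1 hmd.1.1

lemma card_clPairs_inter {α : Type*} [DecidableEq α] {P Q : Finset (Finset α)}
    (hP : (P : Set (Finset α)).PairwiseDisjoint id)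
    (hQ : (Q : Set (Finset α)).PairwiseDisjoint id) :
    (clPairs P ∩ clPairs Q).card
      = ∑ c ∈ P, ∑ d ∈ Q, (c ∩ d).card.choose 2 := by
  have heq : clPairs P ∩ clPairs Q
      = (P ×ˢ Q).biUnion (fun cd => (cd.1 ∩ cd.2).sym2.filter (fun p => ¬ p.IsDiag)) := by
    ext m
    simp only [mem_inter, mem_clPairs, mem_biUnion, mem_filter, mem_product, mem_sym2_iff,
      Finset.mem_inter, Prod.exists]
    constructor
    · rintro ⟨⟨⟨c, hc, hmc⟩, hd1⟩, ⟨d, hd, hmd⟩, _⟩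
      exact ⟨c, d, ⟨hc, hd⟩, fun a ha => ⟨hmc a ha, hmd a ha⟩, hd1⟩
    · rintro ⟨c, d, ⟨hc, hd⟩, hm, hnd⟩
      exact ⟨⟨⟨c, hc, fun a ha => (hm a ha).1⟩, hnd⟩, ⟨d, hd, fun a ha => (hm a ha).2⟩, hnd⟩
  rw [heq, card_biUnion]
  · rw [Finset.sum_product]
    exact Finset.sum_congr rfl fun c _ => Finset.sum_congr rfl fun d _ => card_filter_sym2 _
  · rintro ⟨c, d⟩ hcd ⟨c', d'⟩ hcd' hne
    rw [Function.onFun, Finset.disjoint_left]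
    intro m hm hm'
    induction m using Sym2.ind with
    | _ a b =>
      simp only [mem_filter, Finset.mk_mem_sym2_iff, Finset.mem_inter,
        Sym2.isDiag_iff_proj_eq] at hm hm'
      rw [mem_coe, mem_product] at hcd hcd'
      have hc : c = c' := by
        by_contra h
        exact Finset.disjoint_left.mp (hP hcd.1 hcd'.1 h) hm.1.1.1 hm'.1.1.1
      have hd : d = d' := by
        by_contra h
        exact Finset.disjoint_left.mp (hQ hcd.2 hcd'.2 h) hm.1.1.2 hm'.1.1.2
      exact hne (by rw [hc, hd])

lemma partOf_eq {α : Type*} [DecidableEq α] {D : Finset α} (C : Finpartition D)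
    {c : Finset α} (hc : c ∈ C.parts) {i : α} (hi : i ∈ c) :
    partOf C.parts i = c := by
  have : C.parts.filter (fun c' => i ∈ c') = {c} := by
    ext c'
    simp only [mem_filter, mem_singleton]
    constructor
    · rintro ⟨hc', hi'⟩
      exact C.eq_of_mem_parts hc' hc hi' hi
    · rintro rfl
      exact ⟨hc, hi⟩
  rw [partOf, this, Finset.sup_singleton, id]

theorem stmt3 {α : Type*} [DecidableEq α] (D : Finset α) (C Cp : Finpartition D)
    (p : α → ℝ) (hp : ∀ i ∈ D, 0 < p i) (hsum : ∑ i ∈ D, p i = 1)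
    (hpred : 0 < ∑ d ∈ Cp.parts, (d.card.choose 2 : ℝ)) :
    ((clPairs C.parts ∩ clPairs Cp.parts).card : ℝ) / (clPairs Cp.parts).card
      = ∑ i ∈ D, p i *
          (gfun Cp.parts (partOf C.parts i) / (p i * (partOf C.parts i).card)) := by
  -- simplify each summand
  have hterm : ∀ i ∈ D, p i * (gfun Cp.parts (partOf C.parts i) / (p i * (partOf C.parts i).card))
      = gfun Cp.parts (partOf C.parts i) / (partOf C.parts i).card := by
    intro i hi
    have hpi := (hp i hi).ne'
    rw [mul_div_assoc', mul_div_mul_left _ _ hpi]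
  rw [Finset.sum_congr rfl hterm]
  -- sum over parts
  have hsplit : ∑ i ∈ D, gfun Cp.parts (partOf C.parts i) / (partOf C.parts i).card
      = ∑ c ∈ C.parts, ∑ i ∈ c, gfun Cp.parts (partOf C.parts i) / (partOf C.parts i).card := by
    have h := Finset.sum_biUnion (s := C.parts) (t := id)
      (f := fun i => gfun Cp.parts (partOf C.parts i) / ((partOf C.parts i).card : ℝ)) C.disjoint
    rw [C.biUnion_parts] at h
    simpa using h
  rw [hsplit]
  have hinner : ∀ c ∈ C.parts,
      (∑ i ∈ c, gfun Cp.parts (partOf C.parts i) / (partOf C.parts i).card)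
        = gfun Cp.parts c := by
    intro c hc
    have hcpos : (0 : ℝ) < c.card := by
      exact_mod_cast Finset.card_pos.mpr (C.nonempty_of_mem_parts hc)
    rw [Finset.sum_congr rfl (fun i hi => by rw [partOf_eq C hc hi])]
    rw [Finset.sum_const, nsmul_eq_mul]
    field_simp
  rw [Finset.sum_congr rfl hinner]
  -- now compute the LHS
  rw [card_clPairs Cp.disjoint, card_clPairs_inter C.disjoint Cp.disjoint]
  push_cast
  rw [Finset.sum_div]
  exact Finset.sum_congr rfl fun c _ => by rw [gfun, ffun]
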